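/- Let A be a finite family of k-subsets of {1,...,n} such that every member of A intersects at most s other members of A. Then the number of r-element subfamilies of A consisting of pairwise disjoint sets is at least (1/r!) · ∏_{i=0}^{r−1} max(|A| − i·(s+1), 0). -/

import Mathlib

lemma greedy_step (s : ℕ) (𝒜 : Finset (Finset ℕ))
    (hs : ∀ A ∈ 𝒜, (𝒜.filter (fun B => B ≠ A ∧ ¬ Disjoint A B)).card ≤ s) (r : ℕ) :
    ((𝒜.powersetCard r).filter
        (fun E => ∀ A ∈ E, ∀ B ∈ E, A ≠ B → Disjoint A B)).card * (𝒜.card - r * (s + 1))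
      ≤ (r + 1) * ((𝒜.powersetCard (r + 1)).filter
        (fun E => ∀ A ∈ E, ∀ B ∈ E, A ≠ B → Disjoint A B)).card := by
  classical
  set Sr := (𝒜.powersetCard r).filter
      (fun E => ∀ A ∈ E, ∀ B ∈ E, A ≠ B → Disjoint A B) with hSr
  set Sr1 := (𝒜.powersetCard (r + 1)).filter
      (fun E => ∀ A ∈ E, ∀ B ∈ E, A ≠ B → Disjoint A B) with hSr1
  set P := (Sr ×ˢ 𝒜).filter (fun p => p.2 ∉ p.1 ∧ ∀ B ∈ p.1, Disjoint p.2 B) with hP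
  have claim1 : Sr.card * (𝒜.card - r * (s + 1)) ≤ P.card := by
    have hfib : ∀ p ∈ P, p.1 ∈ Sr := by
      intro p hp
      simp only [hP, Finset.mem_filter, Finset.mem_product] at hp
      exact hp.1.1
    rw [Finset.card_eq_sum_card_fiberwise hfib]
    have heq : Sr.card * (𝒜.card - r * (s + 1))
        = ∑ _E ∈ Sr, (𝒜.card - r * (s + 1)) := by
      rw [Finset.sum_const, smul_eq_mul]
    rw [heq]
    apply Finset.sum_le_sum
    intro E hE
    -- E ∈ Sr, show 𝒜.card - r*(s+1) ≤ fiber card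
    have hE' := hE
    simp only [hSr, Finset.mem_filter, Finset.mem_powersetCard] at hE'
    obtain ⟨⟨hEsub, hEcard⟩, _⟩ := hE'
    set good := 𝒜.filter (fun A => A ∉ E ∧ ∀ B ∈ E, Disjoint A B) with hgood
    have hinj : good.card ≤ (P.filter fun p => p.1 = E).card := by
      apply Finset.card_le_card_of_injOn (fun A => (E, A))
      · intro A hA
        simp only [Finset.mem_coe, hgood, Finset.mem_filter] at hA
        simp only [Finset.mem_coe, hP, Finset.mem_filter, Finset.mem_product]
        exact ⟨⟨⟨hE, hA.1⟩, hA.2⟩, trivial⟩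
      · intro a _ b _ h
        exact (Prod.mk.injEq _ _ _ _ ▸ h).2
    refine le_trans ?_ hinj
    -- good.card ≥ 𝒜.card - r*(s+1)
    set bad := 𝒜.filter (fun A => ¬(A ∉ E ∧ ∀ B ∈ E, Disjoint A B)) with hbad
    have hsplit : good.card + bad.card = 𝒜.card :=
      Finset.card_filter_add_card_filter_not _
    have hbadle : bad.card ≤ r * (s + 1) := by
      have hsub : bad ⊆ E.biUnion (fun B => 𝒜.filter (fun A => A = B ∨ ¬ Disjoint A B)) := by
        intro A hA
        simp only [hbad, Finset.mem_filter] at hA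
        obtain ⟨hA𝒜, hA2⟩ := hA
        push_neg at hA2
        rw [Finset.mem_biUnion]
        by_cases hmem : A ∈ E
        · exact ⟨A, hmem, by simp [hA𝒜]⟩
        · obtain ⟨B, hB, hnd⟩ := hA2 hmem
          exact ⟨B, hB, by simp [hA𝒜, hnd]⟩
      calc bad.card ≤ _ := Finset.card_le_card hsub
        _ ≤ ∑ B ∈ E, (𝒜.filter (fun A => A = B ∨ ¬ Disjoint A B)).card :=
            Finset.card_biUnion_le
        _ ≤ ∑ _B ∈ E, (s + 1) := by
            apply Finset.sum_le_sum
            intro B hB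
            have hB𝒜 : B ∈ 𝒜 := hEsub hB
            have hss : 𝒜.filter (fun A => A = B ∨ ¬ Disjoint A B)
                ⊆ insert B (𝒜.filter (fun A => A ≠ B ∧ ¬ Disjoint B A)) := by
              intro A hA
              simp only [Finset.mem_filter] at hA
              rcases hA.2 with h | h
              · simp [h]
              · by_cases hAB : A = B
                · simp [hAB]
                · rw [Finset.mem_insert]
                  exact Or.inr (Finset.mem_filter.mpr ⟨hA.1, hAB,
                    fun hd => h (disjoint_comm.mp hd)⟩)
            calc (𝒜.filter (fun A => A = B ∨ ¬ Disjoint A B)).card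
                ≤ (insert B (𝒜.filter (fun A => A ≠ B ∧ ¬ Disjoint B A))).card :=
                  Finset.card_le_card hss
              _ ≤ (𝒜.filter (fun A => A ≠ B ∧ ¬ Disjoint B A)).card + 1 :=
                  Finset.card_insert_le _ _
              _ ≤ s + 1 := by
                  have := hs B hB𝒜
                  omega
        _ = r * (s + 1) := by rw [Finset.sum_const, hEcard, smul_eq_mul]
    omega
  have claim2 : P.card ≤ (r + 1) * Sr1.card := by
    have himg : P.image (fun p => insert p.2 p.1) ⊆ Sr1 := by
      intro F hF
      rw [Finset.mem_image] at hF
      obtain ⟨p, hp, rfl⟩ := hF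
      simp only [hP, Finset.mem_filter, Finset.mem_product] at hp
      obtain ⟨⟨hp1, hp2⟩, hnotmem, hdisj⟩ := hp
      simp only [hSr, Finset.mem_filter, Finset.mem_powersetCard] at hp1
      obtain ⟨⟨hsub, hcard⟩, hpd⟩ := hp1
      simp only [hSr1, Finset.mem_filter, Finset.mem_powersetCard]
      refine ⟨⟨Finset.insert_subset hp2 hsub, ?_⟩, ?_⟩
      · rw [Finset.card_insert_of_notMem hnotmem, hcard]
      · intro A hA B hB hAB
        rw [Finset.mem_insert] at hA hB
        rcases hA with rfl | hA <;> rcases hB with rfl | hB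
        · exact absurd rfl hAB
        · exact hdisj B hB
        · exact (hdisj A hA).symm
        · exact hpd A hA B hB hAB
    have hkey : P.card ≤ (r + 1) * (P.image (fun p => insert p.2 p.1)).card := by
      apply Finset.card_le_mul_card_image
      intro F hF
      have hFcard : F.card = r + 1 := by
        have := himg hF
        simp only [hSr1, Finset.mem_filter, Finset.mem_powersetCard] at this
        exact this.1.2
      rw [← hFcard]
      apply Finset.card_le_card_of_injOn (fun p => p.2)
      · intro p hp
        rw [Finset.mem_coe, Finset.mem_filter] at hp
        rw [← hp.2]
        exact Finset.mem_coe.mpr (Finset.mem_insert_self _ _)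
      · intro p hp q hq h
        have h' : p.2 = q.2 := h
        simp only [Finset.mem_coe, Finset.mem_filter, hP, Finset.mem_product] at hp hq
        obtain ⟨⟨_, hpn, _⟩, hpF⟩ := hp
        obtain ⟨⟨_, hqn, _⟩, hqF⟩ := hq
        have h1 : p.1 = F.erase p.2 := by
          rw [← hpF, Finset.erase_insert hpn]
        have h2 : q.1 = F.erase q.2 := by
          rw [← hqF, Finset.erase_insert hqn]
        have : p.1 = q.1 := by rw [h1, h2, h']
        exact Prod.ext this h'
    have himgcard : (P.image (fun p => insert p.2 p.1)).card ≤ Sr1.card :=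
      Finset.card_le_card himg
    calc P.card ≤ _ := hkey
      _ ≤ (r + 1) * Sr1.card := Nat.mul_le_mul_left _ himgcard
  calc Sr.card * (𝒜.card - r * (s + 1)) ≤ P.card := claim1
    _ ≤ (r + 1) * Sr1.card := claim2

/-- Greedy lower bound: if every member of `𝒜` intersects at most `s` other
members, then the number of `r`-element pairwise disjoint subfamilies of `𝒜`
is at least `(1/r!)·∏_{i=0}^{r-1} max(|𝒜| - i(s+1), 0)`. -/
theorem greedy_matching_count (n k r s : ℕ) (𝒜 : Finset (Finset ℕ))
    (h𝒜 : ∀ A ∈ 𝒜, A ⊆ Finset.range n ∧ A.card = k)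
    (hs : ∀ A ∈ 𝒜, (𝒜.filter (fun B => B ≠ A ∧ ¬ Disjoint A B)).card ≤ s) :
    ∏ i ∈ Finset.range r, (𝒜.card - i * (s + 1))
      ≤ Nat.factorial r *
        ((𝒜.powersetCard r).filter
          (fun E => ∀ A ∈ E, ∀ B ∈ E, A ≠ B → Disjoint A B)).card := by
  induction r with
  | zero =>
      simp only [Finset.range_zero, Finset.prod_empty, Nat.factorial_zero, one_mul]
      have : (∅ : Finset (Finset ℕ)) ∈ (𝒜.powersetCard 0).filter
          (fun E => ∀ A ∈ E, ∀ B ∈ E, A ≠ B → Disjoint A B) := by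
        simp
      exact Finset.card_pos.mpr ⟨∅, this⟩
  | succ r ih =>
      rw [Finset.prod_range_succ]
      calc (∏ i ∈ Finset.range r, (𝒜.card - i * (s + 1))) * (𝒜.card - r * (s + 1))
          ≤ (Nat.factorial r * ((𝒜.powersetCard r).filter
              (fun E => ∀ A ∈ E, ∀ B ∈ E, A ≠ B → Disjoint A B)).card)
            * (𝒜.card - r * (s + 1)) := Nat.mul_le_mul_right _ ih
        _ = Nat.factorial r * (((𝒜.powersetCard r).filter
              (fun E => ∀ A ∈ E, ∀ B ∈ E, A ≠ B → Disjoint A B)).card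
            * (𝒜.card - r * (s + 1))) := by ring
        _ ≤ Nat.factorial r * ((r + 1) * ((𝒜.powersetCard (r + 1)).filter
              (fun E => ∀ A ∈ E, ∀ B ∈ E, A ≠ B → Disjoint A B)).card) :=
            Nat.mul_le_mul_left _ (greedy_step s 𝒜 hs r)
        _ = Nat.factorial (r + 1) * ((𝒜.powersetCard (r + 1)).filter
              (fun E => ∀ A ∈ E, ∀ B ∈ E, A ≠ B → Disjoint A B)).card := by
            rw [Nat.factorial_succ]; ring
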